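/- Non-signalling adapters preserve causal order: Let Y be a non-signalling adapter and W a two-party process matrix on A_I ⊗ A_O ⊗ B_I ⊗ B_O, and set W' := Y ⋆ W (a matrix on A_I' ⊗ A_O' ⊗ B_I' ⊗ B_O'). If W is causally ordered B≺A, i.e., D_{A_O}(W) = W and D_{A_O A_I}(W) = D_{A_O A_I B_O}(W), then W' satisfies D_{A_O'}(W') = W' and D_{A_O' A_I'}(W') = D_{A_O' A_I' B_O'}(W'); likewise, if W is causally ordered A≺B, i.e., D_{B_O}(W) = W and D_{B_O B_I}(W) = D_{B_O B_I A_O}(W), then W' satisfies D_{B_O'}(W') = W' and D_{B_O' B_I'}(W') = D_{B_O' B_I' A_O'}(W'). -/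

import Mathlib

open scoped BigOperators ComplexOrder

/-- Trace-and-replace map `D_X` on the collection `S` of tensor factors:
`D_S(W) = (1/d_S) * (1_S ⊗ tr_S(W))`, written entrywise. -/
noncomputable def Dset {ι : Type} [Fintype ι] [DecidableEq ι] {F : ι → Type}
    [∀ i, Fintype (F i)] [∀ i, DecidableEq (F i)]
    (S : Finset ι) (M : Matrix ((i : ι) → F i) ((i : ι) → F i) ℂ) :
    Matrix ((i : ι) → F i) ((i : ι) → F i) ℂ :=
  fun p q =>
    ((if ∀ i ∈ S, p i = q i then (1 : ℂ) else 0) / ∏ i ∈ S, (Fintype.card (F i) : ℂ)) *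
      ((∑ r : (i : ι) → F i,
          M (fun i => if i ∈ S then r i else p i) (fun i => if i ∈ S then r i else q i)) /
        ∏ i ∈ Sᶜ, (Fintype.card (F i) : ℂ))

/-- Index of the two-party space `A_I ⊗ A_O ⊗ B_I ⊗ B_O`:
slot `0 = A_I`, `1 = A_O`, `2 = B_I`, `3 = B_O`, with dimensions `d i`. -/
abbrev PIdx (d : Fin 4 → ℕ) : Type := (i : Fin 4) → Fin (d i)

abbrev PMat (d : Fin 4 → ℕ) : Type := Matrix (PIdx d) (PIdx d) ℂ

/-- The projector `L_V` onto the subspace of valid two-party process matrices. -/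
noncomputable def LV {d : Fin 4 → ℕ} (W : PMat d) : PMat d :=
  Dset ({1} : Finset (Fin 4)) W + Dset ({3} : Finset (Fin 4)) W
    - Dset ({1, 3} : Finset (Fin 4)) W - Dset ({2, 3} : Finset (Fin 4)) W
    + Dset ({1, 2, 3} : Finset (Fin 4)) W - Dset ({0, 1} : Finset (Fin 4)) W
    + Dset ({0, 1, 3} : Finset (Fin 4)) W

/-- Two-party process matrix: positive semidefinite, `L_V(W) = W`,
and `tr W = d_{A_O} * d_{B_O}`. -/
def IsProc {d : Fin 4 → ℕ} (W : PMat d) : Prop :=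
  W.PosSemidef ∧ LV W = W ∧ W.trace = (d 1 : ℂ) * (d 3 : ℂ)

/-- Free (non-signalling) process matrix: a process matrix with `D_{A_O B_O}(W) = W`. -/
def IsFree {d : Fin 4 → ℕ} (W : PMat d) : Prop :=
  IsProc W ∧ Dset ({1, 3} : Finset (Fin 4)) W = W

/-- Signalling robustness. -/
noncomputable def Rs {d : Fin 4 → ℕ} (W : PMat d) : ℝ :=
  sInf { s : ℝ | 0 ≤ s ∧ ∃ T C : PMat d, IsProc T ∧ IsFree C ∧
    W + (s : ℂ) • T = ((1 + s : ℝ) : ℂ) • C }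

/-- Causal order `A ≺ B`: `D_{B_O}(W) = W` and `D_{B_O B_I}(W) = D_{B_O B_I A_O}(W)`. -/
def OrderedAB {d : Fin 4 → ℕ} (W : PMat d) : Prop :=
  Dset ({3} : Finset (Fin 4)) W = W ∧
    Dset ({2, 3} : Finset (Fin 4)) W = Dset ({1, 2, 3} : Finset (Fin 4)) W

/-- Causal order `B ≺ A`: `D_{A_O}(W) = W` and `D_{A_O A_I}(W) = D_{A_O A_I B_O}(W)`. -/
def OrderedBA {d : Fin 4 → ℕ} (W : PMat d) : Prop :=
  Dset ({1} : Finset (Fin 4)) W = W ∧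
    Dset ({0, 1} : Finset (Fin 4)) W = Dset ({0, 1, 3} : Finset (Fin 4)) W

/-- Index of the adapter space `(A_I ⊗ A_I') ⊗ (A_O ⊗ A_O') ⊗ (B_I ⊗ B_I') ⊗ (B_O ⊗ B_O')`:
`(i, false)` is the unprimed slot `i` (dimension `d i`), `(i, true)` the primed slot `i`
(dimension `e i`); the slot numbering `0 = A_I, 1 = A_O, 2 = B_I, 3 = B_O` is as before. -/
abbrev AdIdx (d e : Fin 4 → ℕ) : Type :=
  (x : Fin 4 × Bool) → Fin (cond x.2 (e x.1) (d x.1))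

/-- Combine a 4-tuple of unprimed indices with a 4-tuple of primed indices. -/
def comb2 {f g : Fin 4 → ℕ} (u : (i : Fin 4) → Fin (f i)) (v : (i : Fin 4) → Fin (g i)) :
    (x : Fin 4 × Bool) → Fin (cond x.2 (g x.1) (f x.1))
  | (i, false) => u i
  | (i, true) => v i

/-- The projector `L_A` on adapters:
`L_A(Y) = Y - D_{A_O}(Y) + D_{A_O A_O'}(Y) - D_{A_I' A_O A_O'}(Y) + D_{A_I A_I' A_O A_O'}(Y)`. -/
noncomputable def LAad {d e : Fin 4 → ℕ} (Y : Matrix (AdIdx d e) (AdIdx d e) ℂ) :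
    Matrix (AdIdx d e) (AdIdx d e) ℂ :=
  Y - Dset ({(1, false)} : Finset (Fin 4 × Bool)) Y
    + Dset ({(1, false), (1, true)} : Finset (Fin 4 × Bool)) Y
    - Dset ({(0, true), (1, false), (1, true)} : Finset (Fin 4 × Bool)) Y
    + Dset ({(0, false), (0, true), (1, false), (1, true)} : Finset (Fin 4 × Bool)) Y

/-- The projector `L_B` on adapters:
`L_B(Y) = Y - D_{B_O}(Y) + D_{B_O B_O'}(Y) - D_{B_I' B_O B_O'}(Y) + D_{B_I B_I' B_O B_O'}(Y)`. -/
noncomputable def LBad {d e : Fin 4 → ℕ} (Y : Matrix (AdIdx d e) (AdIdx d e) ℂ) :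
    Matrix (AdIdx d e) (AdIdx d e) ℂ :=
  Y - Dset ({(3, false)} : Finset (Fin 4 × Bool)) Y
    + Dset ({(3, false), (3, true)} : Finset (Fin 4 × Bool)) Y
    - Dset ({(2, true), (3, false), (3, true)} : Finset (Fin 4 × Bool)) Y
    + Dset ({(2, false), (2, true), (3, false), (3, true)} : Finset (Fin 4 × Bool)) Y

/-- Non-signalling adapter: positive semidefinite, `L_A(L_B(Y)) = Y`, and
`tr(Y) = d_{A_I} * d_{B_I} * d_{A_O'} * d_{B_O'}`. -/
def IsNSAdapter {d e : Fin 4 → ℕ} (Y : Matrix (AdIdx d e) (AdIdx d e) ℂ) : Prop :=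
  Y.PosSemidef ∧ LAad (LBad Y) = Y ∧
    Y.trace = (d 0 : ℂ) * (d 2 : ℂ) * (e 1 : ℂ) * (e 3 : ℂ)

/-- The link-product action of an adapter on a matrix on the unprimed two-party space:
`Y ⋆ W = tr_{A_I A_O B_I B_O}[Y * (W^T ⊗ 1_{A_I' A_O' B_I' B_O'})]`, written entrywise. -/
noncomputable def adAct {d e : Fin 4 → ℕ} (Y : Matrix (AdIdx d e) (AdIdx d e) ℂ)
    (W : PMat d) : PMat e :=
  fun p q => ∑ u : PIdx d, ∑ v : PIdx d, Y (comb2 u p) (comb2 v q) * W u v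


attribute [-instance] Nat.decidableForallFin

section Helpers

variable {ι : Type} [Fintype ι] [DecidableEq ι] {F : ι → Type}
    [∀ i, Fintype (F i)] [∀ i, DecidableEq (F i)]

/-- Merge two index tuples along a finset. -/
def mrg (S : Finset ι) (r p : (i : ι) → F i) : (i : ι) → F i :=
  fun i => if i ∈ S then r i else p i

lemma mrg_apply (S : Finset ι) (r p : (i : ι) → F i) (i : ι) :
    mrg S r p i = if i ∈ S then r i else p i := rfl

lemma matrix_eq_of_card_zero (h : (∏ i : ι, (Fintype.card (F i) : ℂ)) = 0)
    (M M' : Matrix ((i : ι) → F i) ((i : ι) → F i) ℂ) : M = M' := by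
  obtain ⟨i, -, hi⟩ := Finset.prod_eq_zero_iff.mp h
  have he : IsEmpty (F i) := Fintype.card_eq_zero_iff.mp (by exact_mod_cast hi)
  funext p q
  exact (he.false (p i)).elim

lemma cardPi_eq :
    (Fintype.card ((i : ι) → F i) : ℂ) = ∏ i : ι, (Fintype.card (F i) : ℂ) := by
  simp [Fintype.card_pi]

lemma Dset_apply (S : Finset ι) (M : Matrix ((i : ι) → F i) ((i : ι) → F i) ℂ)
    (p q : (i : ι) → F i) :
    Dset S M p q = (if ∀ i ∈ S, p i = q i then (1 : ℂ) else 0)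
        * (∑ r : (i : ι) → F i, M (mrg S r p) (mrg S r q))
        / ∏ i : ι, (Fintype.card (F i) : ℂ) := by
  show ((if ∀ i ∈ S, p i = q i then (1 : ℂ) else 0) / ∏ i ∈ S, (Fintype.card (F i) : ℂ)) *
      ((∑ r : (i : ι) → F i, M (mrg S r p) (mrg S r q)) /
        ∏ i ∈ Sᶜ, (Fintype.card (F i) : ℂ)) = _
  rw [div_mul_div_comm, Finset.prod_mul_prod_compl]

lemma Dset_sub (S : Finset ι) (M M' : Matrix ((i : ι) → F i) ((i : ι) → F i) ℂ) :
    Dset S (M - M') = Dset S M - Dset S M' := by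
  funext p q
  simp only [Dset, Matrix.sub_apply, Finset.sum_sub_distrib]
  ring

lemma Dset_add (S : Finset ι) (M M' : Matrix ((i : ι) → F i) ((i : ι) → F i) ℂ) :
    Dset S (M + M') = Dset S M + Dset S M' := by
  funext p q
  simp only [Dset, Matrix.add_apply, Finset.sum_add_distrib]
  ring

lemma sum_sum_mrg (T : Finset ι) (g : ((i : ι) → F i) → ℂ) :
    ∑ r : (i : ι) → F i, ∑ s : (i : ι) → F i, g (mrg T s r)
      = (Fintype.card ((i : ι) → F i) : ℂ) * ∑ t : (i : ι) → F i, g t := by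
  have hinv : Function.Involutive
      (fun x : ((i : ι) → F i) × ((i : ι) → F i) => (mrg T x.2 x.1, mrg T x.1 x.2)) := by
    intro x
    refine Prod.ext (funext fun i => ?_) (funext fun i => ?_) <;>
      simp only [mrg_apply] <;> split_ifs <;> rfl
  calc ∑ r : (i : ι) → F i, ∑ s : (i : ι) → F i, g (mrg T s r)
      = ∑ x : ((i : ι) → F i) × ((i : ι) → F i), g (mrg T x.2 x.1) :=
        (Fintype.sum_prod_type (fun x => g (mrg T x.2 x.1))).symm
    _ = ∑ x : ((i : ι) → F i) × ((i : ι) → F i), g x.1 :=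
        Fintype.sum_bijective _ hinv.bijective _ _ (fun x => rfl)
    _ = ∑ r : (i : ι) → F i, ∑ _s : (i : ι) → F i, g r :=
        Fintype.sum_prod_type (fun x => g x.1)
    _ = (Fintype.card ((i : ι) → F i) : ℂ) * ∑ t : (i : ι) → F i, g t := by
        simp only [Finset.sum_const, Finset.card_univ, nsmul_eq_mul, cardPi_eq]
        rw [← Finset.mul_sum]

lemma mrg_union_eq (S T : Finset ι) (s r p : (i : ι) → F i) :
    mrg T s (mrg S r p) = mrg (S ∪ T) (mrg T s r) p := by
  funext i
  by_cases hT : i ∈ T <;> by_cases hS : i ∈ S <;>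
    simp [mrg_apply, hT, hS]

set_option maxHeartbeats 1000000 in
lemma Dset_comp (S T : Finset ι) (M : Matrix ((i : ι) → F i) ((i : ι) → F i) ℂ) :
    Dset S (Dset T M) = Dset (S ∪ T) M := by
  by_cases hN : (∏ i : ι, (Fintype.card (F i) : ℂ)) = 0
  · exact matrix_eq_of_card_zero hN _ _
  funext p q
  rw [Dset_apply, Dset_apply]
  have hin : ∀ r : (i : ι) → F i,
      Dset T M (mrg S r p) (mrg S r q)
        = (if ∀ i ∈ T, i ∈ S ∨ p i = q i then (1 : ℂ) else 0)
          * (∑ s : (i : ι) → F i,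
              M (mrg (S ∪ T) (mrg T s r) p) (mrg (S ∪ T) (mrg T s r) q))
          / ∏ i : ι, (Fintype.card (F i) : ℂ) := by
    intro r
    rw [Dset_apply]
    congr 1
    · congr 1
      · refine if_congr ?_ rfl rfl
        refine forall₂_congr fun i hi => ?_
        by_cases hS : i ∈ S <;> simp [mrg_apply, hS]
      · refine Finset.sum_congr rfl fun s _ => ?_
        rw [mrg_union_eq, mrg_union_eq]
  simp only [hin]
  have hstep : (∑ r : (i : ι) → F i,
      (if ∀ i ∈ T, i ∈ S ∨ p i = q i then (1 : ℂ) else 0)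
        * (∑ s : (i : ι) → F i,
            M (mrg (S ∪ T) (mrg T s r) p) (mrg (S ∪ T) (mrg T s r) q))
        / ∏ i : ι, (Fintype.card (F i) : ℂ))
      = (if ∀ i ∈ T, i ∈ S ∨ p i = q i then (1 : ℂ) else 0)
        * ((∏ i : ι, (Fintype.card (F i) : ℂ))
            * ∑ t : (i : ι) → F i, M (mrg (S ∪ T) t p) (mrg (S ∪ T) t q))
        / ∏ i : ι, (Fintype.card (F i) : ℂ) := by
    rw [← Finset.sum_div, ← Finset.mul_sum,
      sum_sum_mrg T (fun t => M (mrg (S ∪ T) t p) (mrg (S ∪ T) t q)), cardPi_eq]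
  rw [hstep]
  have hdelta : (if ∀ i ∈ S, p i = q i then (1 : ℂ) else 0)
      * (if ∀ i ∈ T, i ∈ S ∨ p i = q i then (1 : ℂ) else 0)
      = (if ∀ i ∈ S ∪ T, p i = q i then (1 : ℂ) else 0) := by
    rw [ite_zero_mul_ite_zero]
    refine if_congr ?_ (one_mul 1) rfl
    constructor
    · rintro ⟨h1, h2⟩ i hi
      rcases Finset.mem_union.mp hi with h | h
      · exact h1 i h
      · rcases h2 i h with h' | h'
        · exact h1 i h'
        · exact h'
    · intro h
      exact ⟨fun i hi => h i (Finset.mem_union_left _ hi),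
        fun i hi => Or.inr (h i (Finset.mem_union_right _ hi))⟩
  rw [← hdelta]
  field_simp

lemma mrg_cancel1 (S : Finset ι) (a b : (i : ι) → F i) :
    mrg S (mrg S a b) (mrg S b a) = a := by
  funext i; by_cases h : i ∈ S <;> simp [mrg_apply, h]

lemma mrg_cancel2 (S : Finset ι) (u v t : (i : ι) → F i) (h : ∀ i ∈ S, u i = v i) :
    mrg S (mrg S u t) (mrg S t v) = v := by
  funext i; by_cases hi : i ∈ S <;> simp [mrg_apply, hi, h i]

lemma pairing (S : Finset ι) (f g : ((i : ι) → F i) → ((i : ι) → F i) → ℂ) :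
    ∑ x : (((i : ι) → F i) × ((i : ι) → F i)) × ((i : ι) → F i),
        (if ∀ i ∈ S, x.1.1 i = x.1.2 i then (1 : ℂ) else 0)
          * (f (mrg S x.2 x.1.1) (mrg S x.2 x.1.2) * g x.1.1 x.1.2)
      = ∑ x : (((i : ι) → F i) × ((i : ι) → F i)) × ((i : ι) → F i),
        (if ∀ i ∈ S, x.1.1 i = x.1.2 i then (1 : ℂ) else 0)
          * (f x.1.1 x.1.2 * g (mrg S x.2 x.1.1) (mrg S x.2 x.1.2)) := by
  simp only [ite_mul, one_mul, zero_mul]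
  rw [← Finset.sum_filter, ← Finset.sum_filter]
  refine Finset.sum_nbij'
    (fun x => ((mrg S x.2 x.1.1, mrg S x.2 x.1.2), mrg S x.1.1 x.2))
    (fun x => ((mrg S x.2 x.1.1, mrg S x.2 x.1.2), mrg S x.1.1 x.2))
    ?_ ?_ ?_ ?_ ?_
  · intro x _
    simp only [Finset.mem_filter, Finset.mem_univ, true_and]
    intro i hi; simp [mrg_apply, hi]
  · intro x _
    simp only [Finset.mem_filter, Finset.mem_univ, true_and]
    intro i hi; simp [mrg_apply, hi]
  · intro x hx
    have hP : ∀ i ∈ S, x.1.1 i = x.1.2 i := (Finset.mem_filter.mp hx).2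
    refine Prod.ext (Prod.ext ?_ ?_) ?_
    · exact mrg_cancel1 S x.1.1 x.2
    · exact mrg_cancel2 S x.1.1 x.1.2 x.2 hP
    · exact mrg_cancel1 S x.2 x.1.1
  · intro x hx
    have hP : ∀ i ∈ S, x.1.1 i = x.1.2 i := (Finset.mem_filter.mp hx).2
    refine Prod.ext (Prod.ext ?_ ?_) ?_
    · exact mrg_cancel1 S x.1.1 x.2
    · exact mrg_cancel2 S x.1.1 x.1.2 x.2 hP
    · exact mrg_cancel1 S x.2 x.1.1
  · intro x hx
    have hP : ∀ i ∈ S, x.1.1 i = x.1.2 i := (Finset.mem_filter.mp hx).2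
    simp only
    rw [mrg_cancel1 S x.1.1 x.2, mrg_cancel2 S x.1.1 x.1.2 x.2 hP]

end Helpers


section Adapter

variable {d e : Fin 4 → ℕ}

lemma comb2_fst {f g : Fin 4 → ℕ} (u : (i : Fin 4) → Fin (f i)) (v : (i : Fin 4) → Fin (g i))
    (i : Fin 4) : comb2 u v (i, false) = u i := rfl

lemma comb2_snd {f g : Fin 4 → ℕ} (u : (i : Fin 4) → Fin (f i)) (v : (i : Fin 4) → Fin (g i))
    (i : Fin 4) : comb2 u v (i, true) = v i := rfl

def adEquiv (d e : Fin 4 → ℕ) : (PIdx d × PIdx e) ≃ AdIdx d e where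
  toFun x := comb2 x.1 x.2
  invFun R := (fun i => R (i, false), fun i => R (i, true))
  left_inv x := rfl
  right_inv R := by
    funext x
    rcases x with ⟨i, b⟩
    cases b <;> rfl

lemma sum_AdIdx (g : AdIdx d e → ℂ) :
    ∑ R : AdIdx d e, g R = ∑ u : PIdx d, ∑ r : PIdx e, g (comb2 u r) :=
  calc ∑ R : AdIdx d e, g R
      = ∑ x : PIdx d × PIdx e, g (adEquiv d e x) := (Equiv.sum_comp _ g).symm
    _ = ∑ u : PIdx d, ∑ r : PIdx e, g (adEquiv d e (u, r)) := Fintype.sum_prod_type _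
    _ = ∑ u : PIdx d, ∑ r : PIdx e, g (comb2 u r) := rfl

lemma NA_eq :
    (∏ x : Fin 4 × Bool, (Fintype.card (Fin (cond x.2 (e x.1) (d x.1))) : ℂ))
      = (∏ i : Fin 4, (Fintype.card (Fin (d i)) : ℂ))
        * (∏ i : Fin 4, (Fintype.card (Fin (e i)) : ℂ)) := by
  rw [Fintype.prod_prod_type]
  have h : ∀ i : Fin 4, (∏ b : Bool, (Fintype.card (Fin (cond b (e i) (d i))) : ℂ))
      = (Fintype.card (Fin (d i)) : ℂ) * (Fintype.card (Fin (e i)) : ℂ) := by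
    intro i
    rw [Fintype.prod_bool, mul_comm]
    rfl
  rw [Finset.prod_congr rfl (fun i _ => h i), Finset.prod_mul_distrib]

lemma mrg_image_true (S : Finset (Fin 4)) (R : AdIdx d e) (u : PIdx d) (p : PIdx e) :
    mrg (S.image (fun i => (i, true))) R (comb2 u p)
      = comb2 u (mrg S (fun i => R (i, true)) p) := by
  funext x
  rcases x with ⟨i, b⟩
  cases b
  · have h : ((i, false) : Fin 4 × Bool) ∉ S.image (fun i => (i, true)) := by simp
    simp [mrg_apply, h, comb2_fst]
  · by_cases h : i ∈ S
    · have h' : ((i, true) : Fin 4 × Bool) ∈ S.image (fun i => (i, true)) :=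
        Finset.mem_image_of_mem _ h
      simp [mrg_apply, h', comb2_snd, h]
    · have h' : ((i, true) : Fin 4 × Bool) ∉ S.image (fun i => (i, true)) := by simp [h]
      simp [mrg_apply, h', comb2_snd, h]

lemma mrg_image_false (S : Finset (Fin 4)) (R : AdIdx d e) (u : PIdx d) (p : PIdx e) :
    mrg (S.image (fun i => (i, false))) R (comb2 u p)
      = comb2 (mrg S (fun i => R (i, false)) u) p := by
  funext x
  rcases x with ⟨i, b⟩
  cases b
  · by_cases h : i ∈ S
    · have h' : ((i, false) : Fin 4 × Bool) ∈ S.image (fun i => (i, false)) :=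
        Finset.mem_image_of_mem _ h
      simp [mrg_apply, h', comb2_fst, h]
    · have h' : ((i, false) : Fin 4 × Bool) ∉ S.image (fun i => (i, false)) := by simp [h]
      simp [mrg_apply, h', comb2_fst, h]
  · have h : ((i, true) : Fin 4 × Bool) ∉ S.image (fun i => (i, false)) := by simp
    simp [mrg_apply, h, comb2_snd]

lemma ite_image_true (S : Finset (Fin 4)) (u v : PIdx d) (p q : PIdx e) :
    (if ∀ x ∈ S.image (fun i => (i, true)), comb2 u p x = comb2 v q x then (1 : ℂ) else 0)
      = (if ∀ i ∈ S, p i = q i then (1 : ℂ) else 0) := by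
  refine if_congr ?_ rfl rfl
  rw [Finset.forall_mem_image]
  rfl

lemma ite_image_false (S : Finset (Fin 4)) (u v : PIdx d) (p q : PIdx e) :
    (if ∀ x ∈ S.image (fun i => (i, false)), comb2 u p x = comb2 v q x then (1 : ℂ) else 0)
      = (if ∀ i ∈ S, u i = v i then (1 : ℂ) else 0) := by
  refine if_congr ?_ rfl rfl
  rw [Finset.forall_mem_image]
  rfl

end Adapter

section Transfer

variable {d e : Fin 4 → ℕ}

lemma Nd_ne (hd : ∀ i, 0 < d i) : (∏ i : Fin 4, (Fintype.card (Fin (d i)) : ℂ)) ≠ 0 := by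
  refine Finset.prod_ne_zero_iff.mpr fun i _ => ?_
  simp only [Fintype.card_fin, ne_eq, Nat.cast_eq_zero]
  exact (hd i).ne'

lemma adAct_Dset_true (hd : ∀ i, 0 < d i)
    (Y : Matrix (AdIdx d e) (AdIdx d e) ℂ) (W : PMat d) (S : Finset (Fin 4)) :
    adAct (Dset (S.image (fun i => (i, true))) Y) W = Dset S (adAct Y W) := by
  have hnd := Nd_ne hd
  funext p q
  have hterm : ∀ u v : PIdx d,
      Dset (S.image (fun i => (i, true))) Y (comb2 u p) (comb2 v q)
        = (if ∀ i ∈ S, p i = q i then (1 : ℂ) else 0)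
          * (∑ r : PIdx e, Y (comb2 u (mrg S r p)) (comb2 v (mrg S r q)))
          / ∏ i : Fin 4, (Fintype.card (Fin (e i)) : ℂ) := by
    intro u v
    rw [Dset_apply, ite_image_true, NA_eq]
    simp only [mrg_image_true]
    rw [sum_AdIdx (fun R => Y (comb2 u (mrg S (fun i => R (i, true)) p))
      (comb2 v (mrg S (fun i => R (i, true)) q)))]
    simp only [comb2_snd]
    rw [Finset.sum_const, Finset.card_univ, nsmul_eq_mul, cardPi_eq,
      mul_left_comm, mul_div_mul_left _ _ hnd]
  show (∑ u : PIdx d, ∑ v : PIdx d,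
      Dset (S.image (fun i => (i, true))) Y (comb2 u p) (comb2 v q) * W u v) = _
  simp only [hterm]
  rw [Dset_apply]
  have hswap : (∑ r : PIdx e, adAct Y W (mrg S r p) (mrg S r q))
      = ∑ u : PIdx d, ∑ v : PIdx d, ∑ r : PIdx e,
          Y (comb2 u (mrg S r p)) (comb2 v (mrg S r q)) * W u v := by
    show (∑ r : PIdx e, ∑ u : PIdx d, ∑ v : PIdx d,
        Y (comb2 u (mrg S r p)) (comb2 v (mrg S r q)) * W u v) = _
    rw [Finset.sum_comm]
    exact Finset.sum_congr rfl fun u _ => Finset.sum_comm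
  rw [hswap]
  simp only [Finset.mul_sum, Finset.sum_mul, Finset.sum_div, div_mul_eq_mul_div,
    mul_div_assoc]
  refine Finset.sum_congr rfl fun u _ => Finset.sum_congr rfl fun v _ =>
    Finset.sum_congr rfl fun r _ => by ring

set_option maxHeartbeats 2000000 in
lemma adAct_Dset_false (hd : ∀ i, 0 < d i) (he : ∀ i, 0 < e i)
    (Y : Matrix (AdIdx d e) (AdIdx d e) ℂ) (W : PMat d) (S : Finset (Fin 4)) :
    adAct (Dset (S.image (fun i => (i, false))) Y) W = adAct Y (Dset S W) := by
  have hne := Nd_ne he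
  funext p q
  have hterm : ∀ u v : PIdx d,
      Dset (S.image (fun i => (i, false))) Y (comb2 u p) (comb2 v q)
        = (if ∀ i ∈ S, u i = v i then (1 : ℂ) else 0)
          * (∑ t : PIdx d, Y (comb2 (mrg S t u) p) (comb2 (mrg S t v) q))
          / ∏ i : Fin 4, (Fintype.card (Fin (d i)) : ℂ) := by
    intro u v
    rw [Dset_apply, ite_image_false, NA_eq]
    simp only [mrg_image_false]
    rw [sum_AdIdx (fun R => Y (comb2 (mrg S (fun i => R (i, false)) u) p)
      (comb2 (mrg S (fun i => R (i, false)) v) q))]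
    simp only [comb2_fst]
    have hc : ∀ t : PIdx d, (∑ _r : PIdx e,
        Y (comb2 (mrg S t u) p) (comb2 (mrg S t v) q))
        = (∏ i : Fin 4, (Fintype.card (Fin (e i)) : ℂ))
          * Y (comb2 (mrg S t u) p) (comb2 (mrg S t v) q) := by
      intro t
      rw [Finset.sum_const, Finset.card_univ, nsmul_eq_mul, cardPi_eq]
    simp only [hc]
    rw [← Finset.mul_sum, mul_left_comm, mul_comm
      (∏ i : Fin 4, (Fintype.card (Fin (d i)) : ℂ))
      (∏ i : Fin 4, (Fintype.card (Fin (e i)) : ℂ)), mul_div_mul_left _ _ hne]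
  have key := pairing S (fun a b => Y (comb2 a p) (comb2 b q)) (fun a b => W a b)
  simp only [Fintype.sum_prod_type] at key
  show (∑ u : PIdx d, ∑ v : PIdx d,
      Dset (S.image (fun i => (i, false)) : Finset (Fin 4 × Bool)) Y (comb2 u p) (comb2 v q) * W u v)
    = ∑ u : PIdx d, ∑ v : PIdx d, Y (comb2 u p) (comb2 v q) * Dset S W u v
  simp only [hterm, Dset_apply]
  have hpush : ∀ (c w : ℂ) (A : PIdx d → ℂ),
      (c * ∑ t : PIdx d, A t) / (∏ i : Fin 4, (Fintype.card (Fin (d i)) : ℂ)) * w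
        = ∑ t : PIdx d, c * (A t * w) / ∏ i : Fin 4, (Fintype.card (Fin (d i)) : ℂ) := by
    intro c w A
    rw [← Finset.sum_div, ← Finset.mul_sum, ← Finset.sum_mul]
    ring
  have hpull : ∀ (c w : ℂ) (A : PIdx d → ℂ),
      w * ((c * ∑ t : PIdx d, A t) / (∏ i : Fin 4, (Fintype.card (Fin (d i)) : ℂ)))
        = ∑ t : PIdx d, c * (w * A t) / ∏ i : Fin 4, (Fintype.card (Fin (d i)) : ℂ) := by
    intro c w A
    rw [← Finset.sum_div, ← Finset.mul_sum, ← Finset.mul_sum]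
    ring
  simp only [hpush, hpull]
  simp only [← Finset.sum_div]
  rw [key]

end Transfer

section Assembly

variable {d e : Fin 4 → ℕ}

lemma adAct_sub_left (Y₁ Y₂ : Matrix (AdIdx d e) (AdIdx d e) ℂ) (W : PMat d) :
    adAct (Y₁ - Y₂) W = adAct Y₁ W - adAct Y₂ W := by
  funext p q
  simp [adAct, Matrix.sub_apply, sub_mul, Finset.sum_sub_distrib]

lemma adAct_add_left (Y₁ Y₂ : Matrix (AdIdx d e) (AdIdx d e) ℂ) (W : PMat d) :
    adAct (Y₁ + Y₂) W = adAct Y₁ W + adAct Y₂ W := by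
  funext p q
  simp [adAct, Matrix.add_apply, add_mul, Finset.sum_add_distrib]

lemma adAct_mixed (hd : ∀ i, 0 < d i) (he : ∀ i, 0 < e i)
    (Y : Matrix (AdIdx d e) (AdIdx d e) ℂ) (W : PMat d) (Su Sp : Finset (Fin 4)) :
    adAct (Dset (Su.image (fun i => (i, false)) ∪ Sp.image (fun i => (i, true))) Y) W
      = Dset Sp (adAct Y (Dset Su W)) := by
  rw [Finset.union_comm, ← Dset_comp, adAct_Dset_true hd, adAct_Dset_false hd he]

lemma LL_comm (Y : Matrix (AdIdx d e) (AdIdx d e) ℂ) : LAad (LBad Y) = LBad (LAad Y) := by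
  simp only [LAad, LBad, Dset_sub, Dset_add, Dset_comp, Finset.union_comm]
  abel

lemma star_BA (hd : ∀ i, 0 < d i) (he : ∀ i, 0 < e i)
    (Y : Matrix (AdIdx d e) (AdIdx d e) ℂ) (hY : LAad (LBad Y) = Y)
    (W : PMat d) (h1 : Dset ({1} : Finset (Fin 4)) W = W) :
    adAct Y W
      = Dset ({1} : Finset (Fin 4)) (adAct (LBad Y) W)
        - Dset ({0, 1} : Finset (Fin 4)) (adAct (LBad Y) W)
        + Dset ({0, 1} : Finset (Fin 4))
            (adAct (LBad Y) (Dset ({0, 1} : Finset (Fin 4)) W)) := by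
  conv_lhs => rw [← hY]
  simp only [LAad]
  simp only [adAct_sub_left, adAct_add_left]
  rw [show ({(0, false), (0, true), (1, false), (1, true)} : Finset (Fin 4 × Bool))
      = ({0, 1} : Finset (Fin 4)).image (fun i => (i, false))
        ∪ ({0, 1} : Finset (Fin 4)).image (fun i => (i, true)) from by decide,
    adAct_mixed hd he]
  rw [show ({(0, true), (1, false), (1, true)} : Finset (Fin 4 × Bool))
      = ({1} : Finset (Fin 4)).image (fun i => (i, false))
        ∪ ({0, 1} : Finset (Fin 4)).image (fun i => (i, true)) from by decide,
    adAct_mixed hd he, h1]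
  rw [show ({(1, false), (1, true)} : Finset (Fin 4 × Bool))
      = ({1} : Finset (Fin 4)).image (fun i => (i, false))
        ∪ ({1} : Finset (Fin 4)).image (fun i => (i, true)) from by decide,
    adAct_mixed hd he, h1]
  rw [show ({(1, false)} : Finset (Fin 4 × Bool))
      = ({1} : Finset (Fin 4)).image (fun i => (i, false)) from by decide,
    adAct_Dset_false hd he, h1]
  abel

lemma BA1 (hd : ∀ i, 0 < d i) (he : ∀ i, 0 < e i)
    (Y : Matrix (AdIdx d e) (AdIdx d e) ℂ) (hY : LAad (LBad Y) = Y)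
    (W : PMat d) (h1 : Dset ({1} : Finset (Fin 4)) W = W) :
    Dset ({1} : Finset (Fin 4)) (adAct Y W) = adAct Y W := by
  have hstar := star_BA hd he Y hY W h1
  conv_lhs => rw [hstar]
  simp only [Dset_sub, Dset_add, Dset_comp]
  rw [show ({1} ∪ {1} : Finset (Fin 4)) = {1} from by decide,
    show ({1} ∪ {0, 1} : Finset (Fin 4)) = {0, 1} from by decide]
  exact hstar.symm

lemma BA2 (hd : ∀ i, 0 < d i) (he : ∀ i, 0 < e i)
    (Y : Matrix (AdIdx d e) (AdIdx d e) ℂ) (hY : LAad (LBad Y) = Y)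
    (W : PMat d) (h1 : Dset ({1} : Finset (Fin 4)) W = W)
    (h2 : Dset ({0, 1} : Finset (Fin 4)) W = Dset ({0, 1, 3} : Finset (Fin 4)) W) :
    Dset ({0, 1} : Finset (Fin 4)) (adAct Y W)
      = Dset ({0, 1, 3} : Finset (Fin 4)) (adAct Y W) := by
  have hstar := star_BA hd he Y hY W h1
  have hV : Dset ({3} : Finset (Fin 4)) (Dset ({0, 1} : Finset (Fin 4)) W)
      = Dset ({0, 1} : Finset (Fin 4)) W := by
    rw [Dset_comp, show ({3} ∪ {0, 1} : Finset (Fin 4)) = {0, 1, 3} from by decide, ← h2]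
  have hexp : adAct (LBad Y) (Dset ({0, 1} : Finset (Fin 4)) W)
      = adAct Y (Dset ({0, 1} : Finset (Fin 4)) W)
        - adAct Y (Dset ({0, 1} : Finset (Fin 4)) W)
        + Dset ({3} : Finset (Fin 4)) (adAct Y (Dset ({0, 1} : Finset (Fin 4)) W))
        - Dset ({2, 3} : Finset (Fin 4)) (adAct Y (Dset ({0, 1} : Finset (Fin 4)) W))
        + Dset ({2, 3} : Finset (Fin 4))
            (adAct Y (Dset ({2, 3} : Finset (Fin 4)) (Dset ({0, 1} : Finset (Fin 4)) W))) := by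
    simp only [LBad]
    simp only [adAct_sub_left, adAct_add_left]
    rw [show ({(2, false), (2, true), (3, false), (3, true)} : Finset (Fin 4 × Bool))
        = ({2, 3} : Finset (Fin 4)).image (fun i => (i, false))
          ∪ ({2, 3} : Finset (Fin 4)).image (fun i => (i, true)) from by decide,
      adAct_mixed hd he]
    rw [show ({(2, true), (3, false), (3, true)} : Finset (Fin 4 × Bool))
        = ({3} : Finset (Fin 4)).image (fun i => (i, false))
          ∪ ({2, 3} : Finset (Fin 4)).image (fun i => (i, true)) from by decide,
      adAct_mixed hd he, hV]
    rw [show ({(3, false), (3, true)} : Finset (Fin 4 × Bool))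
        = ({3} : Finset (Fin 4)).image (fun i => (i, false))
          ∪ ({3} : Finset (Fin 4)).image (fun i => (i, true)) from by decide,
      adAct_mixed hd he, hV]
    rw [show ({(3, false)} : Finset (Fin 4 × Bool))
        = ({3} : Finset (Fin 4)).image (fun i => (i, false)) from by decide,
      adAct_Dset_false hd he, hV]
  rw [hstar, hexp]
  simp only [Dset_sub, Dset_add, Dset_comp]
  simp only [show ({0, 1} ∪ {1} : Finset (Fin 4)) = {0, 1} from by decide,
    show ({0, 1} ∪ {0, 1} : Finset (Fin 4)) = {0, 1} from by decide,
    show ({0, 1} ∪ {3} : Finset (Fin 4)) = {0, 1, 3} from by decide,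
    show ({0, 1} ∪ {2, 3} : Finset (Fin 4)) = {0, 1, 2, 3} from by decide,
    show ({0, 1} ∪ {0, 1, 3} : Finset (Fin 4)) = {0, 1, 3} from by decide,
    show ({0, 1} ∪ {0, 1, 2, 3} : Finset (Fin 4)) = {0, 1, 2, 3} from by decide,
    show ({0, 1, 3} ∪ {1} : Finset (Fin 4)) = {0, 1, 3} from by decide,
    show ({0, 1, 3} ∪ {0, 1} : Finset (Fin 4)) = {0, 1, 3} from by decide,
    show ({0, 1, 3} ∪ {3} : Finset (Fin 4)) = {0, 1, 3} from by decide,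
    show ({0, 1, 3} ∪ {2, 3} : Finset (Fin 4)) = {0, 1, 2, 3} from by decide,
    show ({0, 1, 3} ∪ {0, 1, 3} : Finset (Fin 4)) = {0, 1, 3} from by decide,
    show ({0, 1, 3} ∪ {0, 1, 2, 3} : Finset (Fin 4)) = {0, 1, 2, 3} from by decide,
    show ({2, 3} ∪ {0, 1} : Finset (Fin 4)) = {0, 1, 2, 3} from by decide]
  abel

lemma star_AB (hd : ∀ i, 0 < d i) (he : ∀ i, 0 < e i)
    (Y : Matrix (AdIdx d e) (AdIdx d e) ℂ) (hY : LBad (LAad Y) = Y)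
    (W : PMat d) (h1 : Dset ({3} : Finset (Fin 4)) W = W) :
    adAct Y W
      = Dset ({3} : Finset (Fin 4)) (adAct (LAad Y) W)
        - Dset ({2, 3} : Finset (Fin 4)) (adAct (LAad Y) W)
        + Dset ({2, 3} : Finset (Fin 4))
            (adAct (LAad Y) (Dset ({2, 3} : Finset (Fin 4)) W)) := by
  conv_lhs => rw [← hY]
  simp only [LBad]
  simp only [adAct_sub_left, adAct_add_left]
  rw [show ({(2, false), (2, true), (3, false), (3, true)} : Finset (Fin 4 × Bool))
      = ({2, 3} : Finset (Fin 4)).image (fun i => (i, false))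
        ∪ ({2, 3} : Finset (Fin 4)).image (fun i => (i, true)) from by decide,
    adAct_mixed hd he]
  rw [show ({(2, true), (3, false), (3, true)} : Finset (Fin 4 × Bool))
      = ({3} : Finset (Fin 4)).image (fun i => (i, false))
        ∪ ({2, 3} : Finset (Fin 4)).image (fun i => (i, true)) from by decide,
    adAct_mixed hd he, h1]
  rw [show ({(3, false), (3, true)} : Finset (Fin 4 × Bool))
      = ({3} : Finset (Fin 4)).image (fun i => (i, false))
        ∪ ({3} : Finset (Fin 4)).image (fun i => (i, true)) from by decide,
    adAct_mixed hd he, h1]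
  rw [show ({(3, false)} : Finset (Fin 4 × Bool))
      = ({3} : Finset (Fin 4)).image (fun i => (i, false)) from by decide,
    adAct_Dset_false hd he, h1]
  abel

lemma AB1 (hd : ∀ i, 0 < d i) (he : ∀ i, 0 < e i)
    (Y : Matrix (AdIdx d e) (AdIdx d e) ℂ) (hY : LBad (LAad Y) = Y)
    (W : PMat d) (h1 : Dset ({3} : Finset (Fin 4)) W = W) :
    Dset ({3} : Finset (Fin 4)) (adAct Y W) = adAct Y W := by
  have hstar := star_AB hd he Y hY W h1
  conv_lhs => rw [hstar]
  simp only [Dset_sub, Dset_add, Dset_comp]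
  rw [show ({3} ∪ {3} : Finset (Fin 4)) = {3} from by decide,
    show ({3} ∪ {2, 3} : Finset (Fin 4)) = {2, 3} from by decide]
  exact hstar.symm

lemma AB2 (hd : ∀ i, 0 < d i) (he : ∀ i, 0 < e i)
    (Y : Matrix (AdIdx d e) (AdIdx d e) ℂ) (hY : LBad (LAad Y) = Y)
    (W : PMat d) (h1 : Dset ({3} : Finset (Fin 4)) W = W)
    (h2 : Dset ({2, 3} : Finset (Fin 4)) W = Dset ({1, 2, 3} : Finset (Fin 4)) W) :
    Dset ({2, 3} : Finset (Fin 4)) (adAct Y W)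
      = Dset ({1, 2, 3} : Finset (Fin 4)) (adAct Y W) := by
  have hstar := star_AB hd he Y hY W h1
  have hV : Dset ({1} : Finset (Fin 4)) (Dset ({2, 3} : Finset (Fin 4)) W)
      = Dset ({2, 3} : Finset (Fin 4)) W := by
    rw [Dset_comp, show ({1} ∪ {2, 3} : Finset (Fin 4)) = {1, 2, 3} from by decide, ← h2]
  have hexp : adAct (LAad Y) (Dset ({2, 3} : Finset (Fin 4)) W)
      = adAct Y (Dset ({2, 3} : Finset (Fin 4)) W)
        - adAct Y (Dset ({2, 3} : Finset (Fin 4)) W)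
        + Dset ({1} : Finset (Fin 4)) (adAct Y (Dset ({2, 3} : Finset (Fin 4)) W))
        - Dset ({0, 1} : Finset (Fin 4)) (adAct Y (Dset ({2, 3} : Finset (Fin 4)) W))
        + Dset ({0, 1} : Finset (Fin 4))
            (adAct Y (Dset ({0, 1} : Finset (Fin 4)) (Dset ({2, 3} : Finset (Fin 4)) W))) := by
    simp only [LAad]
    simp only [adAct_sub_left, adAct_add_left]
    rw [show ({(0, false), (0, true), (1, false), (1, true)} : Finset (Fin 4 × Bool))
        = ({0, 1} : Finset (Fin 4)).image (fun i => (i, false))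
          ∪ ({0, 1} : Finset (Fin 4)).image (fun i => (i, true)) from by decide,
      adAct_mixed hd he]
    rw [show ({(0, true), (1, false), (1, true)} : Finset (Fin 4 × Bool))
        = ({1} : Finset (Fin 4)).image (fun i => (i, false))
          ∪ ({0, 1} : Finset (Fin 4)).image (fun i => (i, true)) from by decide,
      adAct_mixed hd he, hV]
    rw [show ({(1, false), (1, true)} : Finset (Fin 4 × Bool))
        = ({1} : Finset (Fin 4)).image (fun i => (i, false))
          ∪ ({1} : Finset (Fin 4)).image (fun i => (i, true)) from by decide,
      adAct_mixed hd he, hV]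
    rw [show ({(1, false)} : Finset (Fin 4 × Bool))
        = ({1} : Finset (Fin 4)).image (fun i => (i, false)) from by decide,
      adAct_Dset_false hd he, hV]
  rw [hstar, hexp]
  simp only [Dset_sub, Dset_add, Dset_comp]
  simp only [show ({2, 3} ∪ {3} : Finset (Fin 4)) = {2, 3} from by decide,
    show ({2, 3} ∪ {2, 3} : Finset (Fin 4)) = {2, 3} from by decide,
    show ({2, 3} ∪ {1} : Finset (Fin 4)) = {1, 2, 3} from by decide,
    show ({2, 3} ∪ {0, 1} : Finset (Fin 4)) = {0, 1, 2, 3} from by decide,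
    show ({2, 3} ∪ {1, 2, 3} : Finset (Fin 4)) = {1, 2, 3} from by decide,
    show ({2, 3} ∪ {0, 1, 2, 3} : Finset (Fin 4)) = {0, 1, 2, 3} from by decide,
    show ({1, 2, 3} ∪ {3} : Finset (Fin 4)) = {1, 2, 3} from by decide,
    show ({1, 2, 3} ∪ {2, 3} : Finset (Fin 4)) = {1, 2, 3} from by decide,
    show ({1, 2, 3} ∪ {1} : Finset (Fin 4)) = {1, 2, 3} from by decide,
    show ({1, 2, 3} ∪ {0, 1} : Finset (Fin 4)) = {0, 1, 2, 3} from by decide,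
    show ({1, 2, 3} ∪ {1, 2, 3} : Finset (Fin 4)) = {1, 2, 3} from by decide,
    show ({1, 2, 3} ∪ {0, 1, 2, 3} : Finset (Fin 4)) = {0, 1, 2, 3} from by decide,
    show ({0, 1} ∪ {2, 3} : Finset (Fin 4)) = {0, 1, 2, 3} from by decide]
  abel

end Assembly

/-- Non-signalling adapters preserve causal order. -/
theorem ns_adapters_preserve_order {d e : Fin 4 → ℕ} (hd : ∀ i, 0 < d i) (he : ∀ i, 0 < e i)
    (Y : Matrix (AdIdx d e) (AdIdx d e) ℂ) (hY : IsNSAdapter Y)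
    (W : PMat d) (hW : IsProc W) :
    (OrderedBA W → OrderedBA (adAct Y W)) ∧ (OrderedAB W → OrderedAB (adAct Y W)) := by
  obtain ⟨-, hYp, -⟩ := hY
  have hYc : LBad (LAad Y) = Y := by rw [← LL_comm]; exact hYp
  constructor
  · rintro ⟨h1, h2⟩
    exact ⟨BA1 hd he Y hYp W h1, BA2 hd he Y hYp W h1 h2⟩
  · rintro ⟨h1, h2⟩
    exact ⟨AB1 hd he Y hYc W h1, AB2 hd he Y hYc W h1 h2⟩
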